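/- arXiv:1404.0963 — 4 statements merged into one kernel-verified Lean document; each statement's English description precedes it below -/
import Mathlib

section
/- Let $c, \theta > 0$ be constants and let $(R_k)_{k \ge 0}$ be a sequence of nonnegative real numbers such that for every $k \ge 1$, $R_k \le \sum_{l=1}^{k} \theta^l R_{k-l} + \theta^k c$. Then for all $k \ge 1$, $R_k \le \frac{1}{2}(2\theta)^k (R_0 + c)$. -/
lemma stmt_3_aux (m : ℕ) : ∑ l ∈ Finset.Icc 1 m, (2:ℝ)^(m+1-l) = 2^(m+1) - 2 := by
  induction m with
  | zero => simp
  | succ n ih =>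
    rw [Finset.sum_Icc_succ_top (by omega : 1 ≤ n+1)]
    have h : ∀ l ∈ Finset.Icc 1 n, (2:ℝ)^(n+1+1-l) = 2*2^(n+1-l) := by
      intro l hl
      simp only [Finset.mem_Icc] at hl
      rw [show n+1+1-l = (n+1-l)+1 by omega, pow_succ]; ring
    rw [Finset.sum_congr rfl h, ← Finset.mul_sum, ih]
    norm_num
    ring

theorem stmt_3 (c θ : ℝ) (hc : 0 < c) (hθ : 0 < θ) (R : ℕ → ℝ)
    (hR0 : ∀ k, 0 ≤ R k)
    (hrec : ∀ k, 1 ≤ k → R k ≤ (∑ l ∈ Finset.Icc 1 k, θ ^ l * R (k - l)) + θ ^ k * c) :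
    ∀ k, 1 ≤ k → R k ≤ (1 / 2) * (2 * θ) ^ k * (R 0 + c) := by
  intro k
  induction k using Nat.strong_induction_on with
  | _ k ih =>
    intro hk
    obtain ⟨m, rfl⟩ : ∃ m, k = m + 1 := ⟨k-1, by omega⟩
    have h := hrec (m+1) (by omega)
    have hsum : ∑ l ∈ Finset.Icc 1 (m+1), θ^l * R (m+1-l)
        ≤ θ^(m+1) * R 0 + (1/2) * θ^(m+1) * ((2:ℝ)^(m+1) - 2) * (R 0 + c) := by
      rw [Finset.sum_Icc_succ_top (by omega : 1 ≤ m+1)]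
      simp only [Nat.add_sub_cancel, Nat.sub_self, pow_zero]
      have hb : ∑ l ∈ Finset.Icc 1 m, θ^l * R (m+1-l)
          ≤ ∑ l ∈ Finset.Icc 1 m, (1/2) * (R 0 + c) * θ^(m+1) * (2:ℝ)^(m+1-l) := by
        apply Finset.sum_le_sum
        intro l hl
        simp only [Finset.mem_Icc] at hl
        have hih := ih (m+1-l) (by omega) (by omega)
        calc θ^l * R (m+1-l) ≤ θ^l * ((1/2) * (2*θ)^(m+1-l) * (R 0 + c)) := by
              apply mul_le_mul_of_nonneg_left hih (le_of_lt (pow_pos hθ l))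
          _ = (1/2) * (R 0 + c) * θ^(m+1) * (2:ℝ)^(m+1-l) := by
              rw [mul_pow, show θ^(m+1) = θ^l * θ^(m+1-l) by
                rw [← pow_add]; congr 1; omega]
              ring
      rw [← Finset.mul_sum, stmt_3_aux] at hb
      calc ∑ l ∈ Finset.Icc 1 m, θ^l * R (m+1-l) + θ^(m+1) * R 0
          ≤ (1/2) * (R 0 + c) * θ^(m+1) * ((2:ℝ)^(m+1) - 2) + θ^(m+1) * R 0 := by
            linarith
        _ = θ^(m+1) * R 0 + (1/2) * θ^(m+1) * ((2:ℝ)^(m+1) - 2) * (R 0 + c) := by ring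
    have hfin : θ^(m+1) * R 0 + (1/2) * θ^(m+1) * ((2:ℝ)^(m+1) - 2) * (R 0 + c) + θ^(m+1)*c
        = (1/2) * (2*θ)^(m+1) * (R 0 + c) := by
      rw [mul_pow]; ring
    linarith
end

section
/- Let $W, \widetilde W$ be Banach spaces and $G: W \to \widetilde W$ twice continuously Fréchet differentiable. Let $u, \Delta u, \tilde u, \widetilde{\Delta u} \in W$. Then $\|G(u + \Delta u) - G(u) - (G(\tilde u + \widetilde{\Delta u}) - G(\tilde u))\|_{\widetilde W} \le C_{G'} \|\Delta u - \widetilde{\Delta u}\|_W + C_{G''} (\|u - \tilde u\|_W + \|\Delta u - \widetilde{\Delta u}\|_W) \|\Delta u\|_W$, where $C_{G'} = \sup_{t\in[0,1]} \|G'(\tilde u + t \widetilde{\Delta u})\|$ and $C_{G''} = \sup_{s,t \in [0,1]} \|G''(\xi(t,s))\|$ with $\xi(t,s) = (\tilde u + t\widetilde{\Delta u}) + s\big((u - \tilde u) + t(\Delta u - \widetilde{\Delta u})\big)$. -/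
open Set

theorem stmt_13 (W W' : Type*)
    [NormedAddCommGroup W] [NormedSpace ℝ W]
    [NormedAddCommGroup W'] [NormedSpace ℝ W']
    (G : W → W') (hG : ContDiff ℝ 2 G)
    (u Δu tu tΔu : W)
    (ξ : ℝ → ℝ → W)
    (hξ : ∀ t s : ℝ, ξ t s = (tu + t • tΔu) + s • ((u - tu) + t • (Δu - tΔu)))
    (CG' CG'' : ℝ)
    (hCG' : CG' = ⨆ t : Set.Icc (0:ℝ) 1, ‖fderiv ℝ G (tu + (t : ℝ) • tΔu)‖)
    (hCG'' : CG'' = ⨆ p : Set.Icc (0:ℝ) 1 × Set.Icc (0:ℝ) 1,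
      ‖fderiv ℝ (fderiv ℝ G) (ξ (p.1 : ℝ) (p.2 : ℝ))‖) :
    ‖G (u + Δu) - G u - (G (tu + tΔu) - G tu)‖ ≤
      CG' * ‖Δu - tΔu‖ + CG'' * (‖u - tu‖ + ‖Δu - tΔu‖) * ‖Δu‖ := by
  have hG1 : ContDiff ℝ 1 (fderiv ℝ G) := hG.fderiv_right (by norm_num)
  have hGd : Differentiable ℝ G := hG.differentiable (by norm_num)
  have hG1d : Differentiable ℝ (fderiv ℝ G) := hG1.differentiable (by norm_num)
  have hcont1 : Continuous (fderiv ℝ G) := hG1.continuous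
  have hcont2 : Continuous (fderiv ℝ (fderiv ℝ G)) := hG1.continuous_fderiv (by norm_num)
  -- boundedness of the sup families
  have bdd1 : BddAbove (Set.range fun t : Set.Icc (0:ℝ) 1 =>
      ‖fderiv ℝ G (tu + (t : ℝ) • tΔu)‖) := by
    apply IsCompact.bddAbove
    apply isCompact_range
    fun_prop
  have bdd2 : BddAbove (Set.range fun p : Set.Icc (0:ℝ) 1 × Set.Icc (0:ℝ) 1 =>
      ‖fderiv ℝ (fderiv ℝ G) (ξ (p.1 : ℝ) (p.2 : ℝ))‖) := by
    apply IsCompact.bddAbove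
    apply isCompact_range
    simp only [hξ]
    have hin : Continuous fun p : Set.Icc (0:ℝ) 1 × Set.Icc (0:ℝ) 1 =>
        tu + (p.1 : ℝ) • tΔu + (p.2 : ℝ) • (u - tu + (p.1 : ℝ) • (Δu - tΔu)) := by fun_prop
    have hc := Continuous.norm (E := W →L[ℝ] W →L[ℝ] W') (hcont2.comp hin)
    exact hc
  have hCG'le : ∀ t ∈ Icc (0:ℝ) 1, ‖fderiv ℝ G (tu + t • tΔu)‖ ≤ CG' := by
    intro t ht
    rw [hCG']
    exact le_ciSup bdd1 ⟨t, ht⟩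
  have hCG''le : ∀ t ∈ Icc (0:ℝ) 1, ∀ s ∈ Icc (0:ℝ) 1,
      ‖fderiv ℝ (fderiv ℝ G) (ξ t s)‖ ≤ CG'' := by
    intro t ht s hs
    rw [hCG'']
    exact le_ciSup bdd2 (⟨⟨t, ht⟩, ⟨s, hs⟩⟩ : Set.Icc (0:ℝ) 1 × Set.Icc (0:ℝ) 1)
  have hCG''0 : 0 ≤ CG'' := le_trans (norm_nonneg (fderiv ℝ (fderiv ℝ G) (ξ 0 0)))
    (hCG''le 0 ⟨le_rfl, zero_le_one⟩ 0 ⟨le_rfl, zero_le_one⟩)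
  -- Step B: bound on difference of first derivatives
  have stepB : ∀ t ∈ Icc (0:ℝ) 1,
      ‖fderiv ℝ G (u + t • Δu) - fderiv ℝ G (tu + t • tΔu)‖ ≤
        CG'' * (‖u - tu‖ + ‖Δu - tΔu‖) := by
    intro t ht
    set a := tu + t • tΔu with ha
    set b := u + t • Δu with hb
    have hba : b - a = (u - tu) + t • (Δu - tΔu) := by
      rw [ha, hb, smul_sub]; abel
    have hseg : ∀ x ∈ segment ℝ a b, ‖fderiv ℝ (fderiv ℝ G) x‖ ≤ CG'' := by
      intro x hx
      rw [segment_eq_image'] at hx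
      obtain ⟨r, hr, rfl⟩ := hx
      show ‖fderiv ℝ (fderiv ℝ G) (a + r • (b - a))‖ ≤ CG''
      have : a + r • (b - a) = ξ t r := by rw [hξ, hba]
      rw [this]
      exact hCG''le t ht r hr
    have key : ‖fderiv ℝ G b - fderiv ℝ G a‖ ≤ CG'' * ‖b - a‖ :=
      (convex_segment a b).norm_image_sub_le_of_norm_fderiv_le
        (fun x _ => hG1d x) hseg (left_mem_segment ℝ a b) (right_mem_segment ℝ a b)
    refine key.trans (mul_le_mul_of_nonneg_left ?_ hCG''0)
    rw [hba]
    calc ‖(u - tu) + t • (Δu - tΔu)‖ ≤ ‖u - tu‖ + ‖t • (Δu - tΔu)‖ := norm_add_le _ _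
      _ ≤ ‖u - tu‖ + ‖Δu - tΔu‖ := by
          gcongr
          rw [norm_smul, Real.norm_eq_abs, abs_of_nonneg ht.1]
          exact mul_le_of_le_one_left (norm_nonneg _) ht.2
  -- Step C: mean value along t
  set φ : ℝ → W' := fun t => G (u + t • Δu) - G (tu + t • tΔu) with hφ
  set φ' : ℝ → W' := fun t =>
    fderiv ℝ G (u + t • Δu) Δu - fderiv ℝ G (tu + t • tΔu) tΔu with hφ'
  have hder : ∀ t : ℝ, HasDerivAt φ (φ' t) t := by
    intro t
    have h1 : HasDerivAt (fun s : ℝ => u + s • Δu) Δu t := by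
      simpa using ((hasDerivAt_id t).smul_const Δu).const_add u
    have h2 : HasDerivAt (fun s : ℝ => tu + s • tΔu) tΔu t := by
      simpa using ((hasDerivAt_id t).smul_const tΔu).const_add tu
    exact ((hGd (u + t • Δu)).hasFDerivAt.comp_hasDerivAt t h1).sub
      ((hGd (tu + t • tΔu)).hasFDerivAt.comp_hasDerivAt t h2)
  have bound : ∀ t ∈ Ico (0:ℝ) 1,
      ‖φ' t‖ ≤ CG' * ‖Δu - tΔu‖ + CG'' * (‖u - tu‖ + ‖Δu - tΔu‖) * ‖Δu‖ := by
    intro t ht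
    have ht' : t ∈ Icc (0:ℝ) 1 := Ico_subset_Icc_self ht
    set A := fderiv ℝ G (u + t • Δu)
    set B := fderiv ℝ G (tu + t • tΔu)
    have hre : φ' t = (A - B) Δu + B (Δu - tΔu) := by
      simp [φ', A, B, map_sub]
    rw [hre]
    calc ‖(A - B) Δu + B (Δu - tΔu)‖
        ≤ ‖(A - B) Δu‖ + ‖B (Δu - tΔu)‖ := norm_add_le _ _
      _ ≤ ‖A - B‖ * ‖Δu‖ + ‖B‖ * ‖Δu - tΔu‖ := by
          gcongr <;> exact ContinuousLinearMap.le_opNorm _ _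
      _ ≤ CG'' * (‖u - tu‖ + ‖Δu - tΔu‖) * ‖Δu‖ + CG' * ‖Δu - tΔu‖ := by
          gcongr
          · exact stepB t ht'
          · exact hCG'le t ht'
      _ = CG' * ‖Δu - tΔu‖ + CG'' * (‖u - tu‖ + ‖Δu - tΔu‖) * ‖Δu‖ := by ring
  have main : ‖φ 1 - φ 0‖ ≤ CG' * ‖Δu - tΔu‖ + CG'' * (‖u - tu‖ + ‖Δu - tΔu‖) * ‖Δu‖ :=
    norm_image_sub_le_of_norm_deriv_le_segment_01'
      (fun t _ => (hder t).hasDerivWithinAt) bound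
  have : φ 1 - φ 0 = G (u + Δu) - G u - (G (tu + tΔu) - G tu) := by
    simp only [φ, one_smul, zero_smul, add_zero]
    abel
  rwa [this] at main
end

section
/- Assume the hypotheses: (A1) $\|Q - Q_{h}\| \le c_1 h^\alpha$; (A2) cost per sample $C_\ell \le c_2 h_\ell^{-\gamma}$; (A3) the level-$\ell$ sampling error is at most $c_3 M_\ell^{-\mu_2} \varphi_\ell$ (no log factor, $\mu_1 = 0$); (A4) $\varphi_\ell \le c_4 h_\ell^\beta$, with $h_\ell = h_0 s^{-\ell}$, $s > 1$, constants $c_i \ge 1$, $\alpha,\beta,\gamma,\mu_2 > 0$, $\alpha < \gamma\mu_2$, and $\beta > \gamma\mu_2$. Then for every $0 < \varepsilon < \min(2\varphi_0, 1/e)$ there exist an integer $L$ and real sample sizes $M_0,\dots,M_L > 0$ such that the total error bound $c_1 h_L^\alpha + c_3\sum_{\ell=0}^L M_\ell^{-\mu_2}\varphi_\ell \le \varepsilon$ holds while the total cost satisfies $\sum_{\ell=0}^{L} M_\ell C_\ell \le d_3\, \varepsilon^{-1/\mu_2}$ for a constant $d_3$ independent of $\varepsilon$. -/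
lemma geom_helper {q : ℝ} (hq0 : 0 ≤ q) (hq1 : q < 1) (n : ℕ) :
    ∑ i ∈ Finset.range n, q ^ i ≤ (1 - q)⁻¹ := by
  rw [geom_sum_eq (ne_of_lt hq1)]
  have h1 : (q ^ n - 1) / (q - 1) = (1 - q ^ n) / (1 - q) := by
    rw [← neg_div_neg_eq]; ring_nf
  rw [h1, ← one_div]
  gcongr
  · have : 0 ≤ q ^ n := pow_nonneg hq0 n
    linarith

lemma mul_rpow' {x y : ℝ} (hx : 0 < x) (hy : 0 < y) (z : ℝ) :
    (x * y) ^ z = x ^ z * y ^ z := Real.mul_rpow hx.le hy.le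

lemma rpow_rpow {x : ℝ} (hx : 0 < x) (a b : ℝ) :
    (x ^ a) ^ b = x ^ (a * b) := (Real.rpow_mul hx.le a b).symm

set_option maxHeartbeats 1000000 in
theorem stmt_16 (c1 c2 c3 c4 α β γ μ2 h0 s : ℝ)
    (hc1 : 1 ≤ c1) (hc2 : 1 ≤ c2) (hc3 : 1 ≤ c3) (hc4 : 1 ≤ c4)
    (hα : 0 < α) (hβ : 0 < β) (hγ : 0 < γ) (hμ2 : 0 < μ2)
    (hαγ : α < γ * μ2) (hβγ : γ * μ2 < β)
    (hh0 : 0 < h0) (hs : 1 < s)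
    (C φ : ℕ → ℝ)
    (hCpos : ∀ ℓ, 0 < C ℓ) (hφpos : ∀ ℓ, 0 < φ ℓ)
    (hA2 : ∀ ℓ, C ℓ ≤ c2 * (h0 * s ^ (-(ℓ : ℝ))) ^ (-γ))
    (hA4 : ∀ ℓ, φ ℓ ≤ c4 * (h0 * s ^ (-(ℓ : ℝ))) ^ β) :
    ∃ d3 : ℝ, 0 < d3 ∧ ∀ ε : ℝ, 0 < ε → ε < min (2 * φ 0) (1 / Real.exp 1) →
      ∃ (L : ℕ) (M : ℕ → ℝ), (∀ ℓ ∈ Finset.range (L + 1), 0 < M ℓ) ∧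
        c1 * (h0 * s ^ (-(L : ℝ))) ^ α +
          c3 * ∑ ℓ ∈ Finset.range (L + 1), M ℓ ^ (-μ2) * φ ℓ ≤ ε ∧
        ∑ ℓ ∈ Finset.range (L + 1), M ℓ * C ℓ ≤ d3 * ε ^ (-(1 / μ2)) := by
  have hs0 : (0:ℝ) < s := lt_trans one_pos hs
  have hc10 : (0:ℝ) < c1 := lt_of_lt_of_le one_pos hc1
  have hc20 : (0:ℝ) < c2 := lt_of_lt_of_le one_pos hc2
  have hc30 : (0:ℝ) < c3 := lt_of_lt_of_le one_pos hc3
  have hc40 : (0:ℝ) < c4 := lt_of_lt_of_le one_pos hc4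
  set δ : ℝ := (β - γ * μ2) / 2 with hδdef
  have hδ : 0 < δ := by simp only [hδdef]; linarith
  set q1 : ℝ := s ^ (-δ) with hq1def
  set q2 : ℝ := s ^ (-(δ / μ2)) with hq2def
  have hq1pos : 0 < q1 := Real.rpow_pos_of_pos hs0 _
  have hq1lt : q1 < 1 := Real.rpow_lt_one_of_one_lt_of_neg hs (by linarith)
  have hq2pos : 0 < q2 := Real.rpow_pos_of_pos hs0 _
  have hq2lt : q2 < 1 := Real.rpow_lt_one_of_one_lt_of_neg hs
    (by
      have h : 0 < δ / μ2 := by positivity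
      linarith)
  set S1 : ℝ := (1 - q1)⁻¹ with hS1def
  set S2 : ℝ := (1 - q2)⁻¹ with hS2def
  have hS1pos : 0 < S1 := inv_pos.mpr (by linarith)
  have hS2pos : 0 < S2 := inv_pos.mpr (by linarith)
  have h2c3S1 : (0:ℝ) < 2 * c3 * S1 := by positivity
  set D0 : ℝ := (2 * c3 * S1) ^ (1/μ2) *
    (c4 ^ (1/μ2) * (h0 ^ (β/μ2) * (c2 * h0 ^ (-γ)))) with hD0def
  have hD0pos : 0 < D0 := by
    have h1 : (0:ℝ) < (2 * c3 * S1) ^ (1/μ2) := Real.rpow_pos_of_pos h2c3S1 _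
    have h2 : (0:ℝ) < c4 ^ (1/μ2) := Real.rpow_pos_of_pos hc40 _
    have h3 : (0:ℝ) < h0 ^ (β/μ2) := Real.rpow_pos_of_pos hh0 _
    have h4 : (0:ℝ) < h0 ^ (-γ) := Real.rpow_pos_of_pos hh0 _
    positivity
  refine ⟨D0 * S2, by positivity, ?_⟩
  intro ε hε hεlt
  set A : ℝ := 2 * c1 * h0 ^ α with hAdef
  have hApos : 0 < A := by
    have : (0:ℝ) < h0 ^ α := Real.rpow_pos_of_pos hh0 _
    rw [hAdef]; positivity
  obtain ⟨L, hL⟩ : ∃ L : ℕ, Real.log (A / ε) / (α * Real.log s) ≤ (L:ℝ) :=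
    ⟨⌈Real.log (A / ε) / (α * Real.log s)⌉₊, Nat.le_ceil _⟩
  set M : ℕ → ℝ := fun ℓ =>
    (2 * c3 * S1) ^ (1/μ2) * ε ^ (-(1/μ2)) * (φ ℓ) ^ (1/μ2) *
      s ^ (δ * (ℓ:ℝ) / μ2) with hMdef
  have hMpos : ∀ ℓ : ℕ, 0 < M ℓ := by
    intro ℓ
    exact mul_pos (mul_pos (mul_pos (Real.rpow_pos_of_pos h2c3S1 _)
      (Real.rpow_pos_of_pos hε _)) (Real.rpow_pos_of_pos (hφpos ℓ) _))
      (Real.rpow_pos_of_pos hs0 _)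
  have hq1pow : ∀ ℓ : ℕ, q1 ^ ℓ = s ^ (-(δ * (ℓ:ℝ))) := by
    intro ℓ
    rw [hq1def, ← Real.rpow_natCast (s ^ (-δ)) ℓ, ← Real.rpow_mul hs0.le]
    congr 1; ring
  have hq2pow : ∀ ℓ : ℕ, q2 ^ ℓ = s ^ (-(δ / μ2 * (ℓ:ℝ))) := by
    intro ℓ
    rw [hq2def, ← Real.rpow_natCast (s ^ (-(δ / μ2))) ℓ, ← Real.rpow_mul hs0.le]
    congr 1; ring
  refine ⟨L, M, fun ℓ _ => hMpos ℓ, ?_, ?_⟩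
  · -- error bound
    have hterm : ∀ ℓ : ℕ, M ℓ ^ (-μ2) * φ ℓ = (2 * c3 * S1)⁻¹ * ε * q1 ^ ℓ := by
      intro ℓ
      have hφ := hφpos ℓ
      have e1 : M ℓ ^ (-μ2)
          = (2 * c3 * S1)⁻¹ * ε * (φ ℓ)⁻¹ * s ^ (-(δ * (ℓ:ℝ))) := by
        show ((2 * c3 * S1) ^ (1/μ2) * ε ^ (-(1/μ2)) * (φ ℓ) ^ (1/μ2) *
          s ^ (δ * (ℓ:ℝ) / μ2)) ^ (-μ2) = _
        rw [mul_rpow' (by positivity) (Real.rpow_pos_of_pos hs0 _),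
          mul_rpow' (by positivity) (Real.rpow_pos_of_pos hφ _),
          mul_rpow' (Real.rpow_pos_of_pos h2c3S1 _) (Real.rpow_pos_of_pos hε _),
          rpow_rpow h2c3S1, rpow_rpow hε, rpow_rpow hφ, rpow_rpow hs0,
          show 1/μ2 * -μ2 = -1 by field_simp,
          show -(1/μ2) * -μ2 = 1 by field_simp,
          show δ * (ℓ:ℝ) / μ2 * -μ2 = -(δ * (ℓ:ℝ)) by field_simp,
          Real.rpow_neg_one, Real.rpow_neg_one, Real.rpow_one]
      rw [e1, hq1pow ℓ]
      field_simp
    have hsum2 : c3 * ∑ ℓ ∈ Finset.range (L + 1), M ℓ ^ (-μ2) * φ ℓ ≤ ε / 2 := by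
      have e2 : ∑ ℓ ∈ Finset.range (L + 1), M ℓ ^ (-μ2) * φ ℓ
          = (2 * c3 * S1)⁻¹ * ε * ∑ ℓ ∈ Finset.range (L + 1), q1 ^ ℓ := by
        rw [Finset.mul_sum]
        exact Finset.sum_congr rfl fun ℓ _ => hterm ℓ
      rw [e2]
      have hgeo := geom_helper hq1pos.le hq1lt (L + 1)
      have h1 : 0 < (2 * c3 * S1)⁻¹ * ε := by positivity
      have heq : c3 * ((2 * c3 * S1)⁻¹ * ε * S1) = ε / 2 := by
        field_simp
      calc c3 * ((2 * c3 * S1)⁻¹ * ε * ∑ ℓ ∈ Finset.range (L + 1), q1 ^ ℓ)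
          ≤ c3 * ((2 * c3 * S1)⁻¹ * ε * S1) := by
            have h2 : 0 ≤ ∑ ℓ ∈ Finset.range (L + 1), q1 ^ ℓ :=
              Finset.sum_nonneg fun i _ => pow_nonneg hq1pos.le i
            nlinarith
        _ = ε / 2 := heq
    have hbias : c1 * (h0 * s ^ (-(L : ℝ))) ^ α ≤ ε / 2 := by
      have hlogs : 0 < Real.log s := Real.log_pos hs
      have h1 : Real.log (A / ε) ≤ (L:ℝ) * (α * Real.log s) := by
        rw [div_le_iff₀ (by positivity)] at hL; linarith
      have h2 : A / ε ≤ s ^ ((L:ℝ) * α) := by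
        rw [← Real.exp_log (show (0:ℝ) < A / ε by positivity),
          Real.rpow_def_of_pos hs0]
        exact Real.exp_le_exp.mpr (by linarith [mul_assoc ((L:ℝ)) α (Real.log s)])
      have hsLα : (0:ℝ) < s ^ ((L:ℝ) * α) := Real.rpow_pos_of_pos hs0 _
      have h3 : (h0 * s ^ (-(L : ℝ))) ^ α = h0 ^ α * (s ^ ((L:ℝ) * α))⁻¹ := by
        rw [Real.mul_rpow hh0.le (Real.rpow_pos_of_pos hs0 _).le,
          ← Real.rpow_mul hs0.le, neg_mul, Real.rpow_neg hs0.le]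
      have h4 : (s ^ ((L:ℝ) * α))⁻¹ ≤ ε / A := by
        have h5 : (s ^ ((L:ℝ) * α))⁻¹ ≤ (A / ε)⁻¹ :=
          inv_anti₀ (div_pos hApos hε) h2
        rwa [inv_div] at h5
      have h6 : c1 * h0 ^ α * (ε / A) = ε / 2 := by
        rw [hAdef]
        have : h0 ^ α ≠ 0 := ne_of_gt (Real.rpow_pos_of_pos hh0 α)
        field_simp
      calc c1 * (h0 * s ^ (-(L : ℝ))) ^ α
          = c1 * h0 ^ α * (s ^ ((L:ℝ) * α))⁻¹ := by rw [h3]; ring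
        _ ≤ c1 * h0 ^ α * (ε / A) := by
            apply mul_le_mul_of_nonneg_left h4
            positivity
        _ = ε / 2 := h6
    linarith
  · -- cost bound
    have hcost : ∀ ℓ : ℕ, M ℓ * C ℓ ≤ D0 * ε ^ (-(1/μ2)) * q2 ^ ℓ := by
      intro ℓ
      have hφ := hφpos ℓ
      have hsP : (0:ℝ) < s ^ (-(ℓ:ℝ)) := Real.rpow_pos_of_pos hs0 _
      have hPpos : (0:ℝ) < h0 * s ^ (-(ℓ:ℝ)) := mul_pos hh0 hsP
      have hstep1 : M ℓ * C ℓ ≤ M ℓ * (c2 * (h0 * s ^ (-(ℓ:ℝ))) ^ (-γ)) :=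
        mul_le_mul_of_nonneg_left (hA2 ℓ) (hMpos ℓ).le
      refine le_trans hstep1 ?_
      have hstep2 : (φ ℓ) ^ (1/μ2) ≤ (c4 * (h0 * s ^ (-(ℓ:ℝ))) ^ β) ^ (1/μ2) :=
        Real.rpow_le_rpow hφ.le (hA4 ℓ) (by positivity)
      have hMle : M ℓ ≤ (2 * c3 * S1) ^ (1/μ2) * ε ^ (-(1/μ2)) *
          (c4 * (h0 * s ^ (-(ℓ:ℝ))) ^ β) ^ (1/μ2) * s ^ (δ * (ℓ:ℝ) / μ2) := by
        show (2 * c3 * S1) ^ (1/μ2) * ε ^ (-(1/μ2)) * (φ ℓ) ^ (1/μ2) *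
          s ^ (δ * (ℓ:ℝ) / μ2) ≤ _
        have hpos : (0:ℝ) ≤ (2 * c3 * S1) ^ (1/μ2) * ε ^ (-(1/μ2)) := by positivity
        have := mul_le_mul_of_nonneg_left hstep2 hpos
        have hq : (0:ℝ) ≤ s ^ (δ * (ℓ:ℝ) / μ2) := (Real.rpow_pos_of_pos hs0 _).le
        calc (2 * c3 * S1) ^ (1/μ2) * ε ^ (-(1/μ2)) * (φ ℓ) ^ (1/μ2) *
              s ^ (δ * (ℓ:ℝ) / μ2)
            ≤ (2 * c3 * S1) ^ (1/μ2) * ε ^ (-(1/μ2)) *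
              (c4 * (h0 * s ^ (-(ℓ:ℝ))) ^ β) ^ (1/μ2) * s ^ (δ * (ℓ:ℝ) / μ2) := by
              apply mul_le_mul_of_nonneg_right _ hq
              exact this
          _ = _ := rfl
      have hstep3 : M ℓ * (c2 * (h0 * s ^ (-(ℓ:ℝ))) ^ (-γ)) ≤
          ((2 * c3 * S1) ^ (1/μ2) * ε ^ (-(1/μ2)) *
            (c4 * (h0 * s ^ (-(ℓ:ℝ))) ^ β) ^ (1/μ2) * s ^ (δ * (ℓ:ℝ) / μ2)) *
          (c2 * (h0 * s ^ (-(ℓ:ℝ))) ^ (-γ)) := by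
        apply mul_le_mul_of_nonneg_right hMle
        positivity
      refine le_trans hstep3 (le_of_eq ?_)
      -- key algebraic identity
      have e1 : (c4 * (h0 * s ^ (-(ℓ:ℝ))) ^ β) ^ (1/μ2)
          = c4 ^ (1/μ2) * (h0 ^ (β/μ2) * s ^ (-(ℓ:ℝ) * β * (1/μ2))) := by
        rw [mul_rpow' hc40 (Real.rpow_pos_of_pos hPpos _),
          mul_rpow' hh0 hsP, rpow_rpow hs0,
          mul_rpow' (Real.rpow_pos_of_pos hh0 _) (Real.rpow_pos_of_pos hs0 _),
          rpow_rpow hh0, rpow_rpow hs0]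
        rw [show β * (1/μ2) = β / μ2 by ring]
      have e2 : (h0 * s ^ (-(ℓ:ℝ))) ^ (-γ)
          = h0 ^ (-γ) * s ^ (-(ℓ:ℝ) * (-γ)) := by
        rw [mul_rpow' hh0 hsP, rpow_rpow hs0]
      rw [e1, e2, hq2pow ℓ, hD0def]
      have e3 : s ^ (-(ℓ:ℝ) * β * (1/μ2)) * s ^ (δ * (ℓ:ℝ) / μ2) *
          s ^ (-(ℓ:ℝ) * (-γ)) = s ^ (-(δ / μ2 * (ℓ:ℝ))) := by
        rw [← Real.rpow_add hs0, ← Real.rpow_add hs0]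
        congr 1
        rw [hδdef]
        field_simp
        ring
      calc (2 * c3 * S1) ^ (1/μ2) * ε ^ (-(1/μ2)) *
            (c4 ^ (1/μ2) * (h0 ^ (β/μ2) * s ^ (-(ℓ:ℝ) * β * (1/μ2)))) *
            s ^ (δ * (ℓ:ℝ) / μ2) * (c2 * (h0 ^ (-γ) * s ^ (-(ℓ:ℝ) * (-γ))))
          = ((2 * c3 * S1) ^ (1/μ2) *
              (c4 ^ (1/μ2) * (h0 ^ (β/μ2) * (c2 * h0 ^ (-γ))))) * ε ^ (-(1/μ2)) *
            (s ^ (-(ℓ:ℝ) * β * (1/μ2)) * s ^ (δ * (ℓ:ℝ) / μ2) *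
              s ^ (-(ℓ:ℝ) * (-γ))) := by ring
        _ = _ := by rw [e3]
    calc ∑ ℓ ∈ Finset.range (L + 1), M ℓ * C ℓ
        ≤ ∑ ℓ ∈ Finset.range (L + 1), D0 * ε ^ (-(1/μ2)) * q2 ^ ℓ :=
          Finset.sum_le_sum fun ℓ _ => hcost ℓ
      _ = D0 * ε ^ (-(1/μ2)) * ∑ ℓ ∈ Finset.range (L + 1), q2 ^ ℓ := by
          rw [Finset.mul_sum]
      _ ≤ D0 * ε ^ (-(1/μ2)) * S2 := by
          apply mul_le_mul_of_nonneg_left (geom_helper hq2pos.le hq2lt (L + 1))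
          positivity
      _ = D0 * S2 * ε ^ (-(1/μ2)) := by ring
end

section
/- Assume hypotheses (A1)–(A4) as in the multilevel efficiency theorem with $\mu_1 = 0$, $h_\ell = h_0 s^{-\ell}$, $s>1$, $c_i \ge 1$, $\alpha < \gamma\mu_2$, and $\beta < \gamma\mu_2$. Then for every $0 < \varepsilon < \min(2\varphi_0, 1/e)$ there exist an integer $L$ and real sample sizes $M_0,\dots,M_L > 0$ such that the total error bound $c_1 h_L^\alpha + c_3\sum_{\ell=0}^L M_\ell^{-\mu_2}\varphi_\ell \le \varepsilon$ holds while $\sum_{\ell=0}^{L} M_\ell C_\ell \le d_1\, \varepsilon^{-\frac{1}{\mu_2} - \frac{\gamma - \beta/\mu_2}{\alpha}}$ for a constant $d_1$ independent of $\varepsilon$. -/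
private lemma rpow_npow' {s : ℝ} (hs : 0 ≤ s) (t : ℝ) (ℓ : ℕ) :
    (s ^ t) ^ ℓ = s ^ (t * ℓ) := by
  rw [← Real.rpow_natCast (s ^ t) ℓ, ← Real.rpow_mul hs]

private lemma geom_bound {y : ℝ} (hy : 1 < y) (L : ℕ) :
    ∑ ℓ ∈ Finset.range (L + 1), y ^ ℓ ≤ y ^ L * (y / (y - 1)) := by
  have hy1 : y - 1 > 0 := by linarith
  rw [geom_sum_eq (by linarith) (L + 1)]
  rw [div_le_iff₀ hy1]
  calc y ^ (L + 1) - 1 ≤ y ^ (L + 1) := by linarith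
    _ = y ^ L * y := by ring
    _ = y ^ L * (y / (y - 1)) * (y - 1) := by field_simp

theorem stmt_17 (c1 c2 c3 c4 α β γ μ2 h0 s : ℝ)
    (hc1 : 1 ≤ c1) (hc2 : 1 ≤ c2) (hc3 : 1 ≤ c3) (hc4 : 1 ≤ c4)
    (hα : 0 < α) (hβ : 0 < β) (hγ : 0 < γ) (hμ2 : 0 < μ2)
    (hαγ : α < γ * μ2) (hβγ : β < γ * μ2)
    (hh0 : 0 < h0) (hs : 1 < s)
    (C φ : ℕ → ℝ)
    (hCpos : ∀ ℓ, 0 < C ℓ) (hφpos : ∀ ℓ, 0 < φ ℓ)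
    (hA2 : ∀ ℓ, C ℓ ≤ c2 * (h0 * s ^ (-(ℓ : ℝ))) ^ (-γ))
    (hA4 : ∀ ℓ, φ ℓ ≤ c4 * (h0 * s ^ (-(ℓ : ℝ))) ^ β) :
    ∃ d1 : ℝ, 0 < d1 ∧ ∀ ε : ℝ, 0 < ε → ε < min (2 * φ 0) (1 / Real.exp 1) →
      ∃ (L : ℕ) (M : ℕ → ℝ), (∀ ℓ ∈ Finset.range (L + 1), 0 < M ℓ) ∧
        c1 * (h0 * s ^ (-(L : ℝ))) ^ α +
          c3 * ∑ ℓ ∈ Finset.range (L + 1), M ℓ ^ (-μ2) * φ ℓ ≤ ε ∧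
        ∑ ℓ ∈ Finset.range (L + 1), M ℓ * C ℓ ≤ d1 * ε ^ (-(1 / μ2) - (γ - β / μ2) / α) := by
  have hs0 : (0:ℝ) < s := lt_trans one_pos hs
  have hc10 : (0:ℝ) < c1 := lt_of_lt_of_le one_pos hc1
  have hc20 : (0:ℝ) < c2 := lt_of_lt_of_le one_pos hc2
  have hc30 : (0:ℝ) < c3 := lt_of_lt_of_le one_pos hc3
  have hc40 : (0:ℝ) < c4 := lt_of_lt_of_le one_pos hc4
  have hμ2' : (0:ℝ) < 1 + μ2 := by linarith
  set a : ℝ := (γ * μ2 - β) / (1 + μ2) with ha_def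
  have ha : 0 < a := div_pos (by linarith) hμ2'
  set θ : ℝ := -((β + γ) / (1 + μ2)) with hθ_def
  set b : ℝ := γ - β / μ2 with hb_def
  have hb : 0 < b := by
    have h1 : β / μ2 < γ := (div_lt_iff₀ hμ2).mpr (by linarith)
    simp only [hb_def]; linarith
  set y : ℝ := s ^ a with hy_def
  have hy1 : 1 < y := (Real.one_lt_rpow_iff_of_pos hs0).mpr (Or.inl ⟨hs, ha⟩)
  have hy0 : (0:ℝ) < y := lt_trans one_pos hy1
  set G : ℝ := y / (y - 1) with hG_def
  have hG : 0 < G := div_pos hy0 (by linarith)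
  set B : ℝ := 2 * c3 * c4 * h0 ^ β * G with hB_def
  have hB : 0 < B := by positivity
  set K : ℝ := max 1 (h0 * (2 * c1) ^ (1/α)) with hK_def
  have hK1 : (1:ℝ) ≤ K := le_max_left _ _
  set d1 : ℝ := c2 * h0 ^ (-γ) * G * B ^ (1/μ2) * (s * K) ^ b with hd1_def
  have hd1 : 0 < d1 := by positivity
  refine ⟨d1, hd1, ?_⟩
  intro ε hε hεlt
  have hε1 : ε < 1 := by
    have h1 : ε < 1 / Real.exp 1 := lt_of_lt_of_le hεlt (min_le_right _ _)
    have h2 : (1:ℝ) ≤ Real.exp 1 := by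
      calc (1:ℝ) = Real.exp 0 := (Real.exp_zero).symm
        _ ≤ Real.exp 1 := Real.exp_le_exp.mpr one_pos.le
    calc ε < 1 / Real.exp 1 := h1
      _ ≤ 1 := by rw [div_le_one (by linarith)]; exact h2
  -- choice of L
  set X : ℝ := h0 * (2 * c1 / ε) ^ (1/α) with hX_def
  have hX : 0 < X := by positivity
  set L : ℕ := ⌈Real.logb s X⌉₊ with hL_def
  have hsL_lb : X ≤ s ^ (L : ℝ) := by
    have h1 : Real.logb s X ≤ (L : ℝ) := Nat.le_ceil _
    have h2 : s ^ Real.logb s X ≤ s ^ (L:ℝ) :=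
      Real.rpow_le_rpow_of_exponent_le hs.le h1
    rwa [Real.rpow_logb hs0 (ne_of_gt hs) hX] at h2
  have hsLpos : (0:ℝ) < s ^ (L:ℝ) := Real.rpow_pos_of_pos hs0 _
  have hsL_ub : s ^ (L : ℝ) ≤ s * max 1 X := by
    rcases le_or_gt (Real.logb s X) 0 with hc | hc
    · have hL0 : L = 0 := by
        simp only [hL_def]; exact Nat.ceil_eq_zero.mpr hc
      rw [hL0]
      simp only [Nat.cast_zero, Real.rpow_zero]
      calc (1:ℝ) = 1 * 1 := (one_mul 1).symm
        _ ≤ s * max 1 X := by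
            apply mul_le_mul hs.le (le_max_left _ _) one_pos.le hs0.le
    · have h2 : (L:ℝ) ≤ Real.logb s X + 1 := (Nat.ceil_lt_add_one hc.le).le
      calc s ^ (L:ℝ) ≤ s ^ (Real.logb s X + 1) :=
            Real.rpow_le_rpow_of_exponent_le hs.le h2
        _ = s ^ Real.logb s X * s ^ (1:ℝ) := Real.rpow_add hs0 _ _
        _ = X * s := by rw [Real.rpow_logb hs0 (ne_of_gt hs) hX, Real.rpow_one]
        _ ≤ s * max 1 X := by
            rw [mul_comm]
            exact mul_le_mul_of_nonneg_left (le_max_right _ _) hs0.le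
  -- spatial error bound
  have hhL : h0 * s ^ (-(L : ℝ)) ≤ (ε / (2 * c1)) ^ (1/α) := by
    rw [Real.rpow_neg hs0.le]
    have h1 : (s ^ (L:ℝ))⁻¹ ≤ X⁻¹ := inv_anti₀ hX hsL_lb
    calc h0 * (s ^ (L:ℝ))⁻¹ ≤ h0 * X⁻¹ :=
          mul_le_mul_of_nonneg_left h1 hh0.le
      _ = ((2 * c1 / ε) ^ (1/α))⁻¹ := by
          rw [hX_def, mul_inv, ← mul_assoc, mul_inv_cancel₀ (ne_of_gt hh0), one_mul]
      _ = (ε / (2 * c1)) ^ (1/α) := by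
          rw [← Real.inv_rpow (by positivity), inv_div]
  have hspatial : c1 * (h0 * s ^ (-(L : ℝ))) ^ α ≤ ε / 2 := by
    have hbase : (0:ℝ) ≤ h0 * s ^ (-(L:ℝ)) := by positivity
    have h1 : (h0 * s ^ (-(L : ℝ))) ^ α ≤ ((ε / (2 * c1)) ^ (1/α)) ^ α :=
      Real.rpow_le_rpow hbase hhL hα.le
    have h2 : ((ε / (2 * c1)) ^ (1/α)) ^ α = ε / (2 * c1) := by
      rw [← Real.rpow_mul (by positivity), one_div_mul_cancel (ne_of_gt hα),
        Real.rpow_one]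
    calc c1 * (h0 * s ^ (-(L : ℝ))) ^ α ≤ c1 * (ε / (2 * c1)) := by
          rw [← h2]; exact mul_le_mul_of_nonneg_left h1 hc10.le
      _ = ε / 2 := by field_simp
  -- sample sizes
  set A : ℝ := (B * y ^ L / ε) ^ (1/μ2) with hA_def
  have hA : 0 < A := by positivity
  have hyLpos : (0:ℝ) < y ^ L := by positivity
  set w : ℝ := s ^ θ with hw_def
  have hw : 0 < w := Real.rpow_pos_of_pos hs0 _
  set M : ℕ → ℝ := fun ℓ => A * w ^ ℓ with hM_def
  have hMpos : ∀ ℓ, 0 < M ℓ := fun ℓ => by positivity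
  have hAμ : A ^ (-μ2) = ε / (B * y ^ L) := by
    rw [hA_def, ← Real.rpow_mul (by positivity)]
    have he : 1 / μ2 * (-μ2) = -1 := by field_simp
    rw [he, Real.rpow_neg_one, inv_div]
  have hgeo : ∑ ℓ ∈ Finset.range (L + 1), y ^ ℓ ≤ y ^ L * G := geom_bound hy1 L
  refine ⟨L, M, fun ℓ _ => hMpos ℓ, ?_, ?_⟩
  · -- error bound
    have hterm : ∀ ℓ : ℕ, M ℓ ^ (-μ2) * φ ℓ ≤ A ^ (-μ2) * (c4 * h0 ^ β) * y ^ ℓ := by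
      intro ℓ
      have hMe : M ℓ ^ (-μ2) = A ^ (-μ2) * s ^ (θ * ℓ * (-μ2)) := by
        simp only [hM_def, hw_def]
        rw [rpow_npow' hs0.le, Real.mul_rpow hA.le (Real.rpow_nonneg hs0.le _),
          ← Real.rpow_mul hs0.le]
      have hφe : φ ℓ ≤ c4 * h0 ^ β * s ^ ((-(ℓ:ℝ)) * β) := by
        have h := hA4 ℓ
        rwa [Real.mul_rpow hh0.le (Real.rpow_nonneg hs0.le _),
          ← Real.rpow_mul hs0.le, ← mul_assoc] at h
      have hEE : s ^ (θ * ℓ * (-μ2)) * s ^ ((-(ℓ:ℝ)) * β) = y ^ ℓ := by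
        rw [← Real.rpow_add hs0, hy_def, rpow_npow' hs0.le]
        congr 1
        rw [hθ_def, ha_def]
        field_simp
        ring
      calc M ℓ ^ (-μ2) * φ ℓ
          ≤ M ℓ ^ (-μ2) * (c4 * h0 ^ β * s ^ ((-(ℓ:ℝ)) * β)) :=
            mul_le_mul_of_nonneg_left hφe (Real.rpow_nonneg (hMpos ℓ).le _)
        _ = A ^ (-μ2) * (c4 * h0 ^ β) *
              (s ^ (θ * ℓ * (-μ2)) * s ^ ((-(ℓ:ℝ)) * β)) := by rw [hMe]; ring
        _ = A ^ (-μ2) * (c4 * h0 ^ β) * y ^ ℓ := by rw [hEE]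
    have hApos : (0:ℝ) ≤ A ^ (-μ2) * (c4 * h0 ^ β) := by positivity
    have hsum : c3 * ∑ ℓ ∈ Finset.range (L + 1), M ℓ ^ (-μ2) * φ ℓ ≤ ε / 2 := by
      calc c3 * ∑ ℓ ∈ Finset.range (L + 1), M ℓ ^ (-μ2) * φ ℓ
          ≤ c3 * ∑ ℓ ∈ Finset.range (L + 1), A ^ (-μ2) * (c4 * h0 ^ β) * y ^ ℓ := by
            apply mul_le_mul_of_nonneg_left _ hc30.le
            exact Finset.sum_le_sum fun ℓ _ => hterm ℓ
        _ = c3 * (A ^ (-μ2) * (c4 * h0 ^ β) *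
              ∑ ℓ ∈ Finset.range (L + 1), y ^ ℓ) := by rw [← Finset.mul_sum]
        _ ≤ c3 * (A ^ (-μ2) * (c4 * h0 ^ β) * (y ^ L * G)) := by
            apply mul_le_mul_of_nonneg_left _ hc30.le
            exact mul_le_mul_of_nonneg_left hgeo hApos
        _ = ε / 2 := by
            rw [hAμ, hB_def]
            field_simp
    linarith [hspatial, hsum]
  · -- cost bound
    have hterm : ∀ ℓ : ℕ, M ℓ * C ℓ ≤ A * (c2 * h0 ^ (-γ)) * y ^ ℓ := by
      intro ℓ
      have hCe : C ℓ ≤ c2 * h0 ^ (-γ) * s ^ ((-(ℓ:ℝ)) * (-γ)) := by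
        have h := hA2 ℓ
        rwa [Real.mul_rpow hh0.le (Real.rpow_nonneg hs0.le _),
          ← Real.rpow_mul hs0.le, ← mul_assoc] at h
      have hEE : s ^ (θ * ℓ) * s ^ ((-(ℓ:ℝ)) * (-γ)) = y ^ ℓ := by
        rw [← Real.rpow_add hs0, hy_def, rpow_npow' hs0.le]
        congr 1
        rw [hθ_def, ha_def]
        field_simp
        ring
      calc M ℓ * C ℓ ≤ M ℓ * (c2 * h0 ^ (-γ) * s ^ ((-(ℓ:ℝ)) * (-γ))) :=
            mul_le_mul_of_nonneg_left hCe (hMpos ℓ).le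
        _ = A * (c2 * h0 ^ (-γ)) * (s ^ (θ * ℓ) * s ^ ((-(ℓ:ℝ)) * (-γ))) := by
            simp only [hM_def, hw_def]
            rw [rpow_npow' hs0.le]
            ring
        _ = A * (c2 * h0 ^ (-γ)) * y ^ ℓ := by rw [hEE]
    have hApos2 : (0:ℝ) ≤ A * (c2 * h0 ^ (-γ)) := by positivity
    have hAe : A = B ^ (1/μ2) * ε ^ (-(1/μ2)) * (y ^ L) ^ (1/μ2) := by
      rw [hA_def, Real.div_rpow (by positivity) hε.le,
        Real.mul_rpow hB.le hyLpos.le, Real.rpow_neg hε.le, div_eq_mul_inv]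
      ring
    have hyLe : (y ^ L) ^ (1/μ2) * y ^ L = s ^ (b * L) := by
      rw [hy_def, rpow_npow' hs0.le, ← Real.rpow_mul hs0.le, ← Real.rpow_add hs0]
      congr 1
      rw [ha_def, hb_def]
      field_simp
    have hεexp : (1:ℝ) ≤ ε ^ (-(1/α)) :=
      Real.one_le_rpow_of_pos_of_le_one_of_nonpos hε hε1.le (neg_nonpos.mpr (by positivity))
    have hXe : X ≤ h0 * (2 * c1) ^ (1/α) * ε ^ (-(1/α)) := by
      rw [hX_def, Real.div_rpow (by positivity) hε.le, Real.rpow_neg hε.le]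
      rw [mul_assoc, div_eq_mul_inv]
    have hmax : max 1 X ≤ K * ε ^ (-(1/α)) := by
      apply max_le
      · calc (1:ℝ) = 1 * 1 := (one_mul 1).symm
          _ ≤ K * ε ^ (-(1/α)) :=
            mul_le_mul hK1 hεexp one_pos.le (le_trans one_pos.le hK1)
      · calc X ≤ h0 * (2 * c1) ^ (1/α) * ε ^ (-(1/α)) := hXe
          _ ≤ K * ε ^ (-(1/α)) := by
              apply mul_le_mul_of_nonneg_right (le_max_right _ _)
              positivity
    have hsbL : s ^ (b * (L:ℝ)) ≤ (s * K) ^ b * ε ^ (-(1/α) * b) := by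
      have h1 : s ^ (b * (L:ℝ)) = (s ^ (L:ℝ)) ^ b := by
        rw [mul_comm, Real.rpow_mul hs0.le]
      rw [h1, Real.rpow_mul hε.le, ← Real.mul_rpow (by positivity) (by positivity)]
      apply Real.rpow_le_rpow hsLpos.le _ hb.le
      calc s ^ (L:ℝ) ≤ s * max 1 X := hsL_ub
        _ ≤ s * (K * ε ^ (-(1/α))) := mul_le_mul_of_nonneg_left hmax hs0.le
        _ = s * K * ε ^ (-(1/α)) := by ring
    have hεsplit : ε ^ (-(1/μ2)) * ε ^ (-(1/α) * b) = ε ^ (-(1 / μ2) - (γ - β / μ2) / α) := by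
      rw [← Real.rpow_add hε]
      congr 1
      rw [hb_def]
      field_simp
      ring
    calc ∑ ℓ ∈ Finset.range (L + 1), M ℓ * C ℓ
        ≤ ∑ ℓ ∈ Finset.range (L + 1), A * (c2 * h0 ^ (-γ)) * y ^ ℓ :=
          Finset.sum_le_sum fun ℓ _ => hterm ℓ
      _ = A * (c2 * h0 ^ (-γ)) * ∑ ℓ ∈ Finset.range (L + 1), y ^ ℓ := by
          rw [← Finset.mul_sum]
      _ ≤ A * (c2 * h0 ^ (-γ)) * (y ^ L * G) :=
          mul_le_mul_of_nonneg_left hgeo hApos2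
      _ = c2 * h0 ^ (-γ) * G * B ^ (1/μ2) * ε ^ (-(1/μ2)) *
            ((y ^ L) ^ (1/μ2) * y ^ L) := by rw [hAe]; ring
      _ = c2 * h0 ^ (-γ) * G * B ^ (1/μ2) * ε ^ (-(1/μ2)) * s ^ (b * (L:ℝ)) := by
          rw [hyLe]
      _ ≤ c2 * h0 ^ (-γ) * G * B ^ (1/μ2) * ε ^ (-(1/μ2)) *
            ((s * K) ^ b * ε ^ (-(1/α) * b)) := by
          apply mul_le_mul_of_nonneg_left hsbL (by positivity)
      _ = d1 * (ε ^ (-(1/μ2)) * ε ^ (-(1/α) * b)) := by rw [hd1_def]; ring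
      _ = d1 * ε ^ (-(1 / μ2) - (γ - β / μ2) / α) := by rw [hεsplit]
end
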